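/- (Inversion of the e_q-Laplace transform) Let q ∈ (0,1) and f ∈ ℓ¹(ℤ_{≥0}), and define f̂(ζ) = ∑_{m=0}^∞ f(m)/(ζ q^m; q)_∞ for ζ ∈ ℂ ∖ {q^{−m}}_{m≥0}. Then for every n ∈ ℤ_{≥0}, f(n) = −q^n (1/(2πi)) ∮ (q^{n+1}ζ; q)_∞ f̂(ζ) dζ, where the contour is a positively oriented closed curve enclosing exactly the poles ζ = q^{−m} for 0 ≤ m ≤ n and no other singularities. -/

import Mathlib

open Real

lemma aux_logsum {q : ℝ} (hq0 : 0 < q) (hq1 : q < 1) (z : ℂ) :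
    Summable (fun j : ℕ => Complex.log (1 - z * (q:ℂ)^j)) := by
  apply Summable.of_norm_bounded_eventually_nat (g := fun j => 3/2 * (‖z‖ * q^j))
  · exact ((summable_geometric_of_lt_one hq0.le hq1).mul_left _).mul_left _
  · have h0 : Filter.Tendsto (fun j : ℕ => ‖z‖ * q ^ j) Filter.atTop (nhds 0) := by
      simpa using (tendsto_pow_atTop_nhds_zero_of_lt_one hq0.le hq1).const_mul ‖z‖
    filter_upwards [h0.eventually (ge_mem_nhds (by norm_num : (0:ℝ) < 1/2))] with j hj
    have hn : ‖-(z * (q:ℂ)^j)‖ ≤ 1/2 := by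
      rw [norm_neg, norm_mul, norm_pow, Complex.norm_real, Real.norm_eq_abs, abs_of_pos hq0]
      exact hj
    have := Complex.norm_log_one_add_half_le_self hn
    rw [← sub_eq_add_neg] at this
    refine this.trans ?_
    rw [norm_neg, norm_mul, norm_pow, Complex.norm_real, Real.norm_eq_abs, abs_of_pos hq0]

lemma aux_multne {q : ℝ} (hq0 : 0 < q) (hq1 : q < 1) {z : ℂ}
    (hne : ∀ j : ℕ, 1 - z * (q:ℂ)^j ≠ 0) :
    Multipliable (fun j : ℕ => 1 - z * (q:ℂ)^j) ∧ (∏' j : ℕ, (1 - z * (q:ℂ)^j)) ≠ 0 := by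
  have hlog := aux_logsum hq0 hq1 z
  have hm : Multipliable (fun j : ℕ => 1 - z*(q:ℂ)^j) :=
    Complex.multipliable_of_summable_log hlog
  refine ⟨hm, ?_⟩
  have := Complex.cexp_tsum_eq_tprod (fun j => hne j) hlog
  rw [← this]
  exact Complex.exp_ne_zero _

lemma aux_shift {q : ℝ} (hq0 : 0 < q) (hq1 : q < 1) {z : ℂ}
    (hne : ∀ j : ℕ, 1 - z * (q:ℂ)^j ≠ 0) (b : ℕ) :
    (∏' j : ℕ, (1 - z*(q:ℂ)^j))
      = (∏ k ∈ Finset.range b, (1 - z*(q:ℂ)^k)) * ∏' j : ℕ, (1 - (z*(q:ℂ)^b) * (q:ℂ)^j) := by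
  have hne' : ∀ j : ℕ, 1 - (z*(q:ℂ)^b) * (q:ℂ)^j ≠ 0 := by
    intro j
    have := hne (b + j)
    rw [pow_add] at this
    simpa [mul_assoc] using this
  have hm := (aux_multne hq0 hq1 hne').1
  have h1 : (fun j : ℕ => 1 - (z*(q:ℂ)^b) * (q:ℂ)^j)
      = fun j : ℕ => 1 - z*(q:ℂ)^(j+b) := by
    funext j; rw [pow_add]; ring
  rw [h1] at hm ⊢
  exact (Multipliable.prod_mul_tprod_nat_mul' (f := fun j : ℕ => 1 - z*(q:ℂ)^j) (k := b) hm).symm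

lemma aux_fac {q R : ℝ} {n : ℕ} (hq0 : 0 < q)
    (hbig : ∀ m : ℕ, m ≤ n → 1 < R * q ^ m) {ζ : ℂ} (hζ : ‖ζ‖ = R)
    {a k : ℕ} (hak : a + k ≤ n) : 1 - ζ * (q:ℂ)^a * (q:ℂ)^k ≠ 0 := by
  have hn : ‖ζ * (q:ℂ)^a * (q:ℂ)^k‖ = R * q ^ (a+k) := by
    rw [norm_mul, norm_mul, norm_pow, norm_pow, Complex.norm_real, Real.norm_eq_abs,
      abs_of_pos hq0, hζ, pow_add, mul_assoc]
  have h1 : (1:ℝ) < ‖ζ * (q:ℂ)^a * (q:ℂ)^k‖ := by rw [hn]; exact hbig _ hak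
  intro h
  have : ζ * (q:ℂ)^a * (q:ℂ)^k = 1 := by linear_combination -h
  rw [this, norm_one] at h1
  exact lt_irrefl _ h1

lemma aux_cint {q R : ℝ} {n : ℕ} (hq0 : 0 < q) (hR0 : 0 < R)
    (hbig : ∀ m : ℕ, m ≤ n → 1 < R * q ^ m) (c : ℂ) (a l : ℕ) (hal : a + l ≤ n + 1) :
    CircleIntegrable (fun ζ => c * (∏ k ∈ Finset.range l, (1 - ζ * (q:ℂ)^a * (q:ℂ)^k))⁻¹) 0 R := by
  apply ContinuousOn.circleIntegrable hR0.le
  apply ContinuousOn.mul continuousOn_const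
  apply ContinuousOn.inv₀
  · exact (Continuous.continuousOn (by continuity))
  · intro ζ hζ
    rw [Finset.prod_ne_zero_iff]
    intro k hk
    exact aux_fac hq0 hbig (mem_sphere_zero_iff_norm.mp hζ)
      (by simp only [Finset.mem_range] at hk; omega)

lemma window {q R : ℝ} {n : ℕ} (hq0 : 0 < q) (hq1 : q < 1) (hR0 : 0 < R)
    (hbig : ∀ m : ℕ, m ≤ n → 1 < R * q ^ m) :
    ∀ l a : ℕ, 1 ≤ l → a + l ≤ n + 1 →
    (∮ ζ in C(0, R), (∏ k ∈ Finset.range l, (1 - ζ * (q:ℂ)^a * (q:ℂ)^k))⁻¹)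
      = if l = 1 then -(2*π*Complex.I) * ((q:ℂ)^a)⁻¹ else 0 := by
  intro l
  induction l with
  | zero => intro a h; omega
  | succ l ih =>
    intro a _ hal
    have hqa : ((q:ℂ)^a : ℂ) ≠ 0 := pow_ne_zero _ (by exact_mod_cast hq0.ne')
    rcases Nat.eq_zero_or_pos l with h0 | hl
    · -- base case l+1 = 1
      subst h0
      have hiden : ∀ ζ : ℂ,
          (∏ k ∈ Finset.range 1, (1 - ζ * (q:ℂ)^a * (q:ℂ)^k))⁻¹
            = (-((q:ℂ)^a)⁻¹) * (ζ - ((q:ℂ)^a)⁻¹)⁻¹ := by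
        intro ζ
        rw [Finset.prod_range_one, pow_zero, mul_one]
        rw [neg_mul, ← mul_inv, mul_sub, mul_inv_cancel₀ hqa, ← inv_neg, neg_sub,
          mul_comm ζ ((q:ℂ)^a)]
      have hmem : ((q:ℂ)^a)⁻¹ ∈ Metric.ball (0:ℂ) R := by
        rw [Metric.mem_ball, dist_zero_right, norm_inv, norm_pow, Complex.norm_real,
          Real.norm_eq_abs, abs_of_pos hq0]
        have hqap : (0:ℝ) < q ^ a := pow_pos hq0 a
        have h1 := hbig a (by omega)
        have h2 : (q^a)⁻¹ * 1 < (q^a)⁻¹ * (R * q^a) := by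
          apply mul_lt_mul_of_pos_left h1 (inv_pos.mpr hqap)
        calc (q^a)⁻¹ = (q^a)⁻¹ * 1 := by ring
          _ < (q^a)⁻¹ * (R * q^a) := h2
          _ = R := by field_simp
      rw [show (fun ζ => (∏ k ∈ Finset.range 1, (1 - ζ * (q:ℂ)^a * (q:ℂ)^k))⁻¹)
            = fun ζ => (-((q:ℂ)^a)⁻¹) * (ζ - ((q:ℂ)^a)⁻¹)⁻¹ from funext hiden]
      rw [circleIntegral.integral_const_mul,
        circleIntegral.integral_sub_inv_of_mem_ball hmem]
      rw [if_pos rfl]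
      ring
    · -- inductive step: l ≥ 1
      have hql : (1:ℂ) - (q:ℂ)^l ≠ 0 := by
        intro h
        have : ((q:ℂ)^l : ℂ) = 1 := by linear_combination -h
        have hn : ‖((q:ℂ)^l : ℂ)‖ = q ^ l := by
          rw [norm_pow, Complex.norm_real, Real.norm_eq_abs, abs_of_pos hq0]
        rw [this, norm_one] at hn
        have : q ^ l < 1 := pow_lt_one₀ hq0.le hq1 (by omega)
        rw [← hn] at this
        exact lt_irrefl _ this
      -- pointwise identity on the sphere
      have hiden : Set.EqOn
          (fun ζ => (∏ k ∈ Finset.range (l+1), (1 - ζ * (q:ℂ)^a * (q:ℂ)^k))⁻¹)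
          (fun ζ => ((1:ℂ) - (q:ℂ)^l)⁻¹ *
            ((∏ k ∈ Finset.range l, (1 - ζ * (q:ℂ)^a * (q:ℂ)^k))⁻¹
              - (q:ℂ)^l * (∏ k ∈ Finset.range l, (1 - ζ * (q:ℂ)^(a+1) * (q:ℂ)^k))⁻¹))
          (Metric.sphere (0:ℂ) R) := by
        intro ζ hζs
        have hζ : ‖ζ‖ = R := mem_sphere_zero_iff_norm.mp hζs
        simp only
        set A := ∏ k ∈ Finset.range l, (1 - ζ * (q:ℂ)^a * (q:ℂ)^k) with hA
        set B := ∏ k ∈ Finset.range l, (1 - ζ * (q:ℂ)^(a+1) * (q:ℂ)^k) with hB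
        set C := 1 - ζ * (q:ℂ)^a * (q:ℂ)^l with hC
        set D := 1 - ζ * (q:ℂ)^a * (q:ℂ)^0 with hD
        have hfull1 : ∏ k ∈ Finset.range (l+1), (1 - ζ * (q:ℂ)^a * (q:ℂ)^k) = A * C :=
          Finset.prod_range_succ _ _
        have hfull2 : ∏ k ∈ Finset.range (l+1), (1 - ζ * (q:ℂ)^a * (q:ℂ)^k) = B * D := by
          rw [Finset.prod_range_succ']
          congr 1
          apply Finset.prod_congr rfl
          intro k _
          rw [pow_succ, pow_succ']
          ring
        have hAne : A ≠ 0 := by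
          rw [hA, Finset.prod_ne_zero_iff]
          intro k hk
          exact aux_fac hq0 hbig hζ (by simp only [Finset.mem_range] at hk; omega)
        have hBne : B ≠ 0 := by
          rw [hB, Finset.prod_ne_zero_iff]
          intro k hk
          exact aux_fac hq0 hbig hζ (by simp only [Finset.mem_range] at hk; omega)
        have hCne : C ≠ 0 := aux_fac hq0 hbig hζ (by omega)
        have hDne : D ≠ 0 := aux_fac hq0 hbig hζ (by omega)
        have hCD : C - (q:ℂ)^l * D = 1 - (q:ℂ)^l := by
          rw [hC, hD, pow_zero]
          ring
        have h1 : A⁻¹ = C * (A * C)⁻¹ := by field_simp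
        have h2 : B⁻¹ = D * (A * C)⁻¹ := by
          rw [← hfull1, hfull2]
          field_simp
        rw [hfull1, h1, h2,
          show C * (A*C)⁻¹ - (q:ℂ)^l * (D * (A*C)⁻¹) = (C - (q:ℂ)^l * D) * (A*C)⁻¹ by ring,
          hCD, inv_mul_cancel_left₀ hql]
      rw [circleIntegral.integral_congr hR0.le hiden]
      have e1 : (∮ ζ in C(0, R), ((1:ℂ) - (q:ℂ)^l)⁻¹ *
            ((∏ k ∈ Finset.range l, (1 - ζ * (q:ℂ)^a * (q:ℂ)^k))⁻¹
              - (q:ℂ)^l * (∏ k ∈ Finset.range l, (1 - ζ * (q:ℂ)^(a+1) * (q:ℂ)^k))⁻¹))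
          = ((1:ℂ) - (q:ℂ)^l)⁻¹ *
            ((∮ ζ in C(0, R), (∏ k ∈ Finset.range l, (1 - ζ * (q:ℂ)^a * (q:ℂ)^k))⁻¹)
              - ∮ ζ in C(0, R), (q:ℂ)^l *
                  (∏ k ∈ Finset.range l, (1 - ζ * (q:ℂ)^(a+1) * (q:ℂ)^k))⁻¹) := by
        rw [circleIntegral.integral_const_mul]
        congr 1
        have hi1 := aux_cint (n := n) hq0 hR0 hbig 1 a l (by omega)
        simp only [one_mul] at hi1
        have hi2 := aux_cint (n := n) hq0 hR0 hbig ((q:ℂ)^l) (a+1) l (by omega)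
        exact circleIntegral.integral_sub hi1 hi2
      rw [e1, circleIntegral.integral_const_mul]
      rw [ih a hl (by omega), ih (a+1) hl (by omega)]
      by_cases hl1 : l = 1
      · subst hl1
        rw [if_pos rfl, if_pos rfl, if_neg (by omega)]
        have hqne : ((q:ℂ)) ≠ 0 := by exact_mod_cast hq0.ne'
        have key : (q:ℂ) * ((q:ℂ)^a * (q:ℂ))⁻¹ = ((q:ℂ)^a)⁻¹ := by
          rw [mul_inv, mul_comm (((q:ℂ)^a)⁻¹) _, ← mul_assoc, mul_inv_cancel₀ hqne, one_mul]
        linear_combination ((1-(q:ℂ))⁻¹ * (2*(π:ℂ)*Complex.I)) * key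
      · rw [if_neg hl1, if_neg hl1, if_neg (by omega)]
        ring

lemma aux_fac2 {q R : ℝ} {n : ℕ} (hq0 : 0 < q)
    (hbig : ∀ m : ℕ, m ≤ n → 1 < R * q ^ m)
    (hsm : ∀ m : ℕ, n + 1 ≤ m → R * q ^ m < 1)
    {ζ : ℂ} (hζ : ‖ζ‖ = R) (k : ℕ) : 1 - ζ * (q:ℂ)^k ≠ 0 := by
  have hn : ‖ζ * (q:ℂ)^k‖ = R * q ^ k := by
    rw [norm_mul, norm_pow, Complex.norm_real, Real.norm_eq_abs, abs_of_pos hq0, hζ]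
  intro h
  have h1 : ζ * (q:ℂ)^k = 1 := by linear_combination -h
  rw [h1, norm_one] at hn
  rcases le_or_gt k n with hk | hk
  · exact absurd hn.symm (ne_of_gt (hbig k hk))
  · exact absurd hn.symm (ne_of_lt (hsm k (by omega)))

/-- The rational function to which the integrand reduces termwise on the circle. -/
noncomputable def ratf (q : ℝ) (n m : ℕ) (ζ : ℂ) : ℂ :=
  if m ≤ n then (∏ k ∈ Finset.range (n+1-m), (1 - ζ * (q:ℂ)^m * (q:ℂ)^k))⁻¹
  else ∏ k ∈ Finset.range (m-(n+1)), (1 - (q:ℂ)^(n+1) * ζ * (q:ℂ)^k)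

lemma aux_pointwise {q R : ℝ} {n : ℕ} (hq0 : 0 < q) (hq1 : q < 1)
    (hbig : ∀ m : ℕ, m ≤ n → 1 < R * q ^ m)
    (hsm : ∀ m : ℕ, n + 1 ≤ m → R * q ^ m < 1)
    {ζ : ℂ} (hζ : ‖ζ‖ = R) (c : ℂ) (m : ℕ) :
    (∏' j : ℕ, (1 - (q:ℂ)^(n+1) * ζ * (q:ℂ)^j)) *
        (c / ∏' j : ℕ, (1 - ζ * (q:ℂ)^m * (q:ℂ)^j))
      = c * ratf q n m ζ := by
  have hfac := aux_fac2 hq0 hbig hsm hζ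
  have hne_zP : ∀ j : ℕ, 1 - ((q:ℂ)^(n+1) * ζ) * (q:ℂ)^j ≠ 0 := by
    intro j
    have := hfac (n+1+j)
    rw [pow_add] at this
    intro h; apply this; linear_combination h
  have hne_zm : ∀ j : ℕ, 1 - (ζ * (q:ℂ)^m) * (q:ℂ)^j ≠ 0 := by
    intro j
    have := hfac (m+j)
    rw [pow_add] at this
    intro h; apply this; linear_combination h
  have hPne : (∏' j : ℕ, (1 - (q:ℂ)^(n+1) * ζ * (q:ℂ)^j)) ≠ 0 :=
    (aux_multne hq0 hq1 hne_zP).2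
  have hDne : (∏' j : ℕ, (1 - ζ * (q:ℂ)^m * (q:ℂ)^j)) ≠ 0 :=
    (aux_multne hq0 hq1 hne_zm).2
  rcases le_or_gt m n with hm | hm
  · -- m ≤ n : D = F * P
    have hD := aux_shift hq0 hq1 hne_zm (n+1-m)
    have hz : ζ * (q:ℂ)^m * (q:ℂ)^(n+1-m) = (q:ℂ)^(n+1) * ζ := by
      rw [mul_assoc, ← pow_add, show m + (n+1-m) = n+1 from by omega]; ring
    rw [hz] at hD
    have hFne : (∏ k ∈ Finset.range (n+1-m), (1 - ζ * (q:ℂ)^m * (q:ℂ)^k)) ≠ 0 := by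
      rw [Finset.prod_ne_zero_iff]; intro k _; exact hne_zm k
    rw [ratf, if_pos hm, hD]
    rw [hD] at hDne
    have hPne' : (∏' j : ℕ, (1 - (q:ℂ)^(n+1) * ζ * (q:ℂ)^j)) ≠ 0 := hPne
    field_simp
  · -- m > n : P = G * D
    have hP := aux_shift hq0 hq1 hne_zP (m-(n+1))
    have hz : (q:ℂ)^(n+1) * ζ * (q:ℂ)^(m-(n+1)) = ζ * (q:ℂ)^m := by
      rw [mul_comm ((q:ℂ)^(n+1)) ζ, mul_assoc, ← pow_add,
        show n+1 + (m-(n+1)) = m from by omega]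
    rw [hz] at hP
    rw [ratf, if_neg (by omega), hP]
    field_simp

lemma aux_bound {q R : ℝ} {n : ℕ} (hq0 : 0 < q) (hq1 : q < 1) (hR0 : 0 < R)
    (hbig : ∀ m : ℕ, m ≤ n → 1 < R * q ^ m)
    {ζ : ℂ} (hζ : ‖ζ‖ = R) (m : ℕ) :
    ‖ratf q n m ζ‖ ≤
      max ((max 1 (R * q^n - 1)⁻¹)^(n+1)) (Real.exp (R * q^(n+1) * (1-q)⁻¹)) := by
  have hnq : ∀ a b : ℕ, ‖ζ * (q:ℂ)^a * (q:ℂ)^b‖ = R * q^(a+b) := by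
    intro a b
    rw [norm_mul, norm_mul, norm_pow, norm_pow, Complex.norm_real, Real.norm_eq_abs,
      abs_of_pos hq0, hζ, pow_add, mul_assoc]
  have hδ : 0 < R * q^n - 1 := sub_pos.mpr (hbig n le_rfl)
  rcases le_or_gt m n with hm | hm
  · rw [ratf, if_pos hm, norm_inv, norm_prod, ← Finset.prod_inv_distrib]
    set c1 : ℝ := max 1 (R * q^n - 1)⁻¹ with hc1
    have h1 : ∀ k ∈ Finset.range (n+1-m), ‖1 - ζ * (q:ℂ)^m * (q:ℂ)^k‖⁻¹ ≤ c1 := by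
      intro k hk
      simp only [Finset.mem_range] at hk
      have hmk : m + k ≤ n := by omega
      have hlow : R * q^n - 1 ≤ ‖1 - ζ * (q:ℂ)^m * (q:ℂ)^k‖ := by
        have h2 : R * q^n ≤ R * q^(m+k) := by
          apply mul_le_mul_of_nonneg_left _ hR0.le
          exact pow_le_pow_of_le_one hq0.le hq1.le hmk
        calc R * q^n - 1 ≤ R * q^(m+k) - 1 := by linarith
          _ = ‖ζ * (q:ℂ)^m * (q:ℂ)^k‖ - ‖(1:ℂ)‖ := by rw [hnq, norm_one]
          _ ≤ ‖ζ * (q:ℂ)^m * (q:ℂ)^k - 1‖ := norm_sub_norm_le _ _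
          _ = ‖1 - ζ * (q:ℂ)^m * (q:ℂ)^k‖ := by rw [norm_sub_rev]
      calc ‖1 - ζ * (q:ℂ)^m * (q:ℂ)^k‖⁻¹ ≤ (R * q^n - 1)⁻¹ :=
            inv_anti₀ hδ hlow
        _ ≤ c1 := le_max_right _ _
    calc (∏ k ∈ Finset.range (n+1-m), ‖1 - ζ * (q:ℂ)^m * (q:ℂ)^k‖⁻¹)
        ≤ ∏ _k ∈ Finset.range (n+1-m), c1 :=
          Finset.prod_le_prod (fun k _ => inv_nonneg.mpr (norm_nonneg _)) h1
      _ = c1 ^ (n+1-m) := by rw [Finset.prod_const, Finset.card_range]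
      _ ≤ c1 ^ (n+1) := pow_le_pow_right₀ (le_max_left _ _) (by omega)
      _ ≤ _ := le_max_left _ _
  · rw [ratf, if_neg (by omega), norm_prod]
    have h1 : ∀ k ∈ Finset.range (m-(n+1)), ‖1 - (q:ℂ)^(n+1) * ζ * (q:ℂ)^k‖
        ≤ Real.exp (R * q^(n+1) * q^k) := by
      intro k _
      have hup : ‖1 - (q:ℂ)^(n+1) * ζ * (q:ℂ)^k‖ ≤ 1 + R * q^(n+1) * q^k := by
        calc ‖1 - (q:ℂ)^(n+1) * ζ * (q:ℂ)^k‖ ≤ ‖(1:ℂ)‖ + ‖(q:ℂ)^(n+1) * ζ * (q:ℂ)^k‖ :=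
              norm_sub_le _ _
          _ = 1 + R * q^(n+1) * q^k := by
              rw [norm_one, norm_mul, norm_mul, norm_pow, norm_pow, Complex.norm_real,
                Real.norm_eq_abs, abs_of_pos hq0, hζ]
              ring
      refine hup.trans ?_
      rw [add_comm]
      exact Real.add_one_le_exp _
    calc (∏ k ∈ Finset.range (m-(n+1)), ‖1 - (q:ℂ)^(n+1) * ζ * (q:ℂ)^k‖)
        ≤ ∏ k ∈ Finset.range (m-(n+1)), Real.exp (R * q^(n+1) * q^k) :=
          Finset.prod_le_prod (fun k _ => norm_nonneg _) h1
      _ = Real.exp (∑ k ∈ Finset.range (m-(n+1)), R * q^(n+1) * q^k) :=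
          (Real.exp_sum _ _).symm
      _ ≤ Real.exp (R * q^(n+1) * (1-q)⁻¹) := by
          apply Real.exp_le_exp.mpr
          rw [← Finset.mul_sum]
          apply mul_le_mul_of_nonneg_left _ (by positivity)
          calc (∑ k ∈ Finset.range (m-(n+1)), q^k) ≤ ∑' k : ℕ, q^k :=
                Summable.sum_le_tsum _ (fun i _ => pow_nonneg hq0.le i)
                  (summable_geometric_of_lt_one hq0.le hq1)
            _ = (1-q)⁻¹ := tsum_geometric_of_lt_one hq0.le hq1
      _ ≤ _ := le_max_right _ _

lemma aux_termint {q R : ℝ} {n : ℕ} (hq0 : 0 < q) (hq1 : q < 1) (hR0 : 0 < R)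
    (hbig : ∀ m : ℕ, m ≤ n → 1 < R * q ^ m) (c : ℂ) (m : ℕ) :
    (∮ ζ in C(0, R), c * ratf q n m ζ)
      = if m = n then c * (-(2*π*Complex.I) * ((q:ℂ)^n)⁻¹) else 0 := by
  rcases le_or_gt m n with hm | hm
  · have : (fun ζ => c * ratf q n m ζ)
        = fun ζ => c * (∏ k ∈ Finset.range (n+1-m), (1 - ζ * (q:ℂ)^m * (q:ℂ)^k))⁻¹ := by
      funext ζ; rw [ratf, if_pos hm]
    rw [this, circleIntegral.integral_const_mul,
      window hq0 hq1 hR0 hbig (n+1-m) m (by omega) (by omega)]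
    rcases eq_or_ne m n with hmn | hmn
    · subst hmn
      rw [if_pos (by omega), if_pos rfl]
    · rw [if_neg (by omega), if_neg hmn, mul_zero]
  · have : (fun ζ => c * ratf q n m ζ)
        = fun ζ => c * ∏ k ∈ Finset.range (m-(n+1)), (1 - (q:ℂ)^(n+1) * ζ * (q:ℂ)^k) := by
      funext ζ; rw [ratf, if_neg (by omega)]
    rw [this, if_neg (by omega)]
    have hdiff : Differentiable ℂ
        (fun ζ => c * ∏ k ∈ Finset.range (m-(n+1)), (1 - (q:ℂ)^(n+1) * ζ * (q:ℂ)^k)) := by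
      apply (differentiable_const c).mul
      apply Differentiable.fun_finset_prod
      intro k _
      apply (differentiable_const 1).sub
      exact ((differentiable_const _).mul differentiable_fun_id).mul (differentiable_const _)
    exact Complex.circleIntegral_eq_zero_of_differentiable_on_off_countable hR0.le
      Set.countable_empty hdiff.continuous.continuousOn
      (fun z _ => hdiff.differentiableAt)

lemma aux_ratf_contOn {q R : ℝ} {n : ℕ} (hq0 : 0 < q)
    (hbig : ∀ m : ℕ, m ≤ n → 1 < R * q ^ m) (m : ℕ) :
    ContinuousOn (ratf q n m) (Metric.sphere (0:ℂ) R) := by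
  rcases le_or_gt m n with hm | hm
  · have : ratf q n m = fun ζ =>
        (∏ k ∈ Finset.range (n+1-m), (1 - ζ * (q:ℂ)^m * (q:ℂ)^k))⁻¹ := by
      funext ζ; rw [ratf, if_pos hm]
    rw [this]
    apply ContinuousOn.inv₀ (Continuous.continuousOn (by continuity))
    intro ζ hζ
    rw [Finset.prod_ne_zero_iff]
    intro k hk
    exact aux_fac hq0 hbig (mem_sphere_zero_iff_norm.mp hζ)
      (by simp only [Finset.mem_range] at hk; omega)
  · have : ratf q n m = fun ζ =>
        ∏ k ∈ Finset.range (m-(n+1)), (1 - (q:ℂ)^(n+1) * ζ * (q:ℂ)^k) := by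
      funext ζ; rw [ratf, if_neg (by omega)]
    rw [this]
    exact Continuous.continuousOn (by continuity)

/-- Inversion of the `e_q`-Laplace transform: the contour is the circle of radius `R`
centered at `0`, with `q^{-n} < R < q^{-(n+1)}`, so that it encloses exactly the
singularities `ζ = q^{-m}` for `0 ≤ m ≤ n` of the integrand and no others. -/
theorem stmt18 (q : ℝ) (hq : q ∈ Set.Ioo (0:ℝ) 1)
    (f : ℕ → ℂ) (hf : Summable fun m => ‖f m‖)
    (n : ℕ) (R : ℝ) (hR1 : q ^ (-(n : ℤ)) < R) (hR2 : R < q ^ (-(n + 1) : ℤ)) :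
    f n = -(q : ℂ) ^ n * (1 / (2 * (π : ℂ) * Complex.I)) *
      ∮ ζ in C(0, R),
        (∏' j : ℕ, (1 - (q : ℂ) ^ (n + 1) * ζ * (q : ℂ) ^ j)) *
          ∑' m : ℕ, f m / ∏' j : ℕ, (1 - ζ * (q : ℂ) ^ m * (q : ℂ) ^ j) := by
  obtain ⟨hq0, hq1⟩ := hq
  have hqn : (0:ℝ) < q^n := pow_pos hq0 n
  have hqn1 : (0:ℝ) < q^(n+1) := pow_pos hq0 (n+1)
  have hR1' : (q^n)⁻¹ < R := by
    rwa [zpow_neg, zpow_natCast] at hR1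
  have hR2' : R < (q^(n+1))⁻¹ := by
    rw [show (-(n + 1) : ℤ) = -((n+1 : ℕ) : ℤ) from by push_cast; ring,
      zpow_neg, zpow_natCast] at hR2
    exact hR2
  have hR0 : 0 < R := lt_trans (by positivity) hR1'
  have hbig : ∀ m : ℕ, m ≤ n → 1 < R * q ^ m := by
    intro m hm
    have h1 : q^n ≤ q^m := pow_le_pow_of_le_one hq0.le hq1.le hm
    have h2 : 1 < R * q^n := by
      have := mul_lt_mul_of_pos_right hR1' hqn
      rwa [inv_mul_cancel₀ hqn.ne'] at this
    calc (1:ℝ) < R * q^n := h2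
      _ ≤ R * q^m := mul_le_mul_of_nonneg_left h1 hR0.le
  have hsm : ∀ m : ℕ, n + 1 ≤ m → R * q ^ m < 1 := by
    intro m hm
    have h1 : q^m ≤ q^(n+1) := pow_le_pow_of_le_one hq0.le hq1.le hm
    have h2 : R * q^(n+1) < 1 := by
      have := mul_lt_mul_of_pos_right hR2' hqn1
      rwa [inv_mul_cancel₀ hqn1.ne'] at this
    calc R * q^m ≤ R * q^(n+1) := mul_le_mul_of_nonneg_left h1 hR0.le
      _ < 1 := h2
  set Cb : ℝ := max ((max 1 (R * q^n - 1)⁻¹)^(n+1)) (Real.exp (R * q^(n+1) * (1-q)⁻¹))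
    with hCb
  have hCb0 : 0 ≤ Cb := le_trans (by positivity) (le_max_right _ _)
  -- Step 1 : replace the integrand by the termwise rational functions
  have hstep1 : (∮ ζ in C(0, R),
        (∏' j : ℕ, (1 - (q : ℂ) ^ (n + 1) * ζ * (q : ℂ) ^ j)) *
          ∑' m : ℕ, f m / ∏' j : ℕ, (1 - ζ * (q : ℂ) ^ m * (q : ℂ) ^ j))
      = ∮ ζ in C(0, R), ∑' m : ℕ, f m * ratf q n m ζ := by
    apply circleIntegral.integral_congr hR0.le
    intro ζ hζs
    have hζ : ‖ζ‖ = R := mem_sphere_zero_iff_norm.mp hζs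
    simp only
    rw [← tsum_mul_left]
    exact tsum_congr fun m => aux_pointwise hq0 hq1 hbig hsm hζ (f m) m
  -- Step 2 : interchange sum and integral
  have hG : ∀ (m : ℕ) (θ : ℝ), Continuous fun θ : ℝ =>
      deriv (circleMap 0 R) θ • (f m * ratf q n m (circleMap 0 R θ)) := by
    intro m _
    simp only [deriv_circleMap, smul_eq_mul]
    apply Continuous.mul ((continuous_circleMap 0 R).mul continuous_const)
    apply Continuous.mul continuous_const
    exact (aux_ratf_contOn hq0 hbig m).comp_continuous (continuous_circleMap 0 R)
      (fun θ => circleMap_mem_sphere 0 hR0.le θ)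
  have hGbound : ∀ (m : ℕ) (θ : ℝ),
      ‖deriv (circleMap 0 R) θ • (f m * ratf q n m (circleMap 0 R θ))‖
        ≤ R * Cb * ‖f m‖ := by
    intro m θ
    rw [norm_smul, deriv_circleMap, norm_mul, norm_mul, Complex.norm_I, mul_one]
    have h1 : ‖circleMap 0 R θ‖ = R := by
      rw [norm_circleMap_zero, abs_of_pos hR0]
    have h2 : ‖ratf q n m (circleMap 0 R θ)‖ ≤ Cb :=
      aux_bound hq0 hq1 hR0 hbig (by
        rw [norm_circleMap_zero, abs_of_pos hR0]) m
    calc ‖circleMap 0 R θ‖ * (‖f m‖ * ‖ratf q n m (circleMap 0 R θ)‖)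
        ≤ R * (‖f m‖ * Cb) := by
          rw [h1]
          exact mul_le_mul_of_nonneg_left
            (mul_le_mul_of_nonneg_left h2 (norm_nonneg _)) hR0.le
      _ = R * Cb * ‖f m‖ := by ring
  have hstep2 : (∮ ζ in C(0, R), ∑' m : ℕ, f m * ratf q n m ζ)
      = ∑' m : ℕ, ∮ ζ in C(0, R), f m * ratf q n m ζ := by
    simp only [circleIntegral]
    have hpt : ∀ θ : ℝ,
        deriv (circleMap 0 R) θ • (∑' m : ℕ, f m * ratf q n m (circleMap 0 R θ))
          = ∑' m : ℕ, deriv (circleMap 0 R) θ • (f m * ratf q n m (circleMap 0 R θ)) := by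
      intro θ
      simp only [smul_eq_mul]
      exact (tsum_mul_left).symm
    calc (∫ θ in (0:ℝ)..(2*π),
          deriv (circleMap 0 R) θ • (∑' m : ℕ, f m * ratf q n m (circleMap 0 R θ)))
        = ∫ θ in (0:ℝ)..(2*π),
            ∑' m : ℕ, deriv (circleMap 0 R) θ • (f m * ratf q n m (circleMap 0 R θ)) := by
          simp only [hpt]
      _ = ∫ θ in Set.Ioc (0:ℝ) (2*π),
            ∑' m : ℕ, deriv (circleMap 0 R) θ • (f m * ratf q n m (circleMap 0 R θ)) := by
          rw [intervalIntegral.integral_of_le (by positivity)]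
      _ = ∑' m : ℕ, ∫ θ in Set.Ioc (0:ℝ) (2*π),
            deriv (circleMap 0 R) θ • (f m * ratf q n m (circleMap 0 R θ)) := by
          apply MeasureTheory.integral_tsum
          · exact fun m => ((hG m 0).aestronglyMeasurable).restrict
          · apply ne_top_of_le_ne_top
              (b := ∑' m : ℕ, ENNReal.ofReal (R * Cb * ‖f m‖) * ENNReal.ofReal (2*π)) ?_ ?_
            · rw [ENNReal.tsum_mul_right]
              apply ENNReal.mul_ne_top _ ENNReal.ofReal_ne_top
              have : ∀ m : ℕ, ENNReal.ofReal (R * Cb * ‖f m‖)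
                  = ENNReal.ofReal (R * Cb) * ENNReal.ofReal ‖f m‖ := by
                intro m; rw [ENNReal.ofReal_mul (by positivity)]
              rw [tsum_congr this, ENNReal.tsum_mul_left]
              apply ENNReal.mul_ne_top ENNReal.ofReal_ne_top
              rw [← ENNReal.ofReal_tsum_of_nonneg (fun _ => norm_nonneg _) hf]
              exact ENNReal.ofReal_ne_top
            · apply ENNReal.tsum_le_tsum
              intro m
              calc (∫⁻ θ in Set.Ioc (0:ℝ) (2*π),
                    ‖deriv (circleMap 0 R) θ • (f m * ratf q n m (circleMap 0 R θ))‖₊)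
                  ≤ ∫⁻ _θ in Set.Ioc (0:ℝ) (2*π), ENNReal.ofReal (R * Cb * ‖f m‖) := by
                    apply MeasureTheory.lintegral_mono
                    intro θ
                    dsimp only
                    rw [← ENNReal.ofReal_coe_nnreal, coe_nnnorm]
                    exact ENNReal.ofReal_le_ofReal (hGbound m θ)
                _ = ENNReal.ofReal (R * Cb * ‖f m‖)
                      * MeasureTheory.volume (Set.Ioc (0:ℝ) (2*π)) := by
                    rw [MeasureTheory.setLIntegral_const]
                _ ≤ ENNReal.ofReal (R * Cb * ‖f m‖) * ENNReal.ofReal (2*π) := by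
                    rw [Real.volume_Ioc, sub_zero]
      _ = ∑' m : ℕ, ∫ θ in (0:ℝ)..(2*π),
            deriv (circleMap 0 R) θ • (f m * ratf q n m (circleMap 0 R θ)) :=
          tsum_congr fun m => (intervalIntegral.integral_of_le (by positivity)).symm
  -- Step 3 : evaluate each term
  have hstep3 : (∑' m : ℕ, ∮ ζ in C(0, R), f m * ratf q n m ζ)
      = f n * (-(2*π*Complex.I) * ((q:ℂ)^n)⁻¹) := by
    have h1 : ∀ m : ℕ, (∮ ζ in C(0, R), f m * ratf q n m ζ)
        = if m = n then f n * (-(2*π*Complex.I) * ((q:ℂ)^n)⁻¹) else 0 := by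
      intro m
      rw [aux_termint hq0 hq1 hR0 hbig (f m) m]
      rcases eq_or_ne m n with h | h
      · subst h; rfl
      · simp [h]
    rw [tsum_congr h1, tsum_ite_eq]
  rw [hstep1, hstep2, hstep3]
  have hπ : (π:ℂ) ≠ 0 := by exact_mod_cast Real.pi_ne_zero
  have hqc : ((q:ℂ)) ≠ 0 := by exact_mod_cast hq0.ne'
  have hqcn : ((q:ℂ)^n) ≠ 0 := pow_ne_zero _ hqc
  field_simp
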